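/- (Eckart–Young–Mirsky theorem in Frobenius norm, as invoked in the proof.) Let W ∈ ℝ^{m×n} admit a singular value decomposition W = Σ_{k=1}^{p} σ_k u_k v_kᵀ, where p = min(m, n), σ_1 ≥ σ_2 ≥ … ≥ σ_p ≥ 0, (u_k)_{k=1}^p is orthonormal in ℝ^m, and (v_k)_{k=1}^p is orthonormal in ℝ^n. For 1 ≤ r ≤ p, let W_r = Σ_{k=1}^{r} σ_k u_k v_kᵀ be the rank-r truncation. Then ‖W − W_r‖_F = sqrt(Σ_{k=r+1}^{p} σ_k²), and for every matrix B ∈ ℝ^{m×n} with rank(B) ≤ r one has ‖W − W_r‖_F ≤ ‖W − B‖_F. -/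

import Mathlib

open Matrix Finset

/-- Frobenius inner product of real matrices: ⟨X, Y⟩_F = trace(Xᵀ Y). -/
noncomputable def frobInner {m n : ℕ} (X Y : Matrix (Fin m) (Fin n) ℝ) : ℝ :=
  (Xᵀ * Y).trace

/-- Frobenius norm: ‖X‖_F = sqrt(⟨X, X⟩_F). -/
noncomputable def frobNorm {m n : ℕ} (X : Matrix (Fin m) (Fin n) ℝ) : ℝ :=
  Real.sqrt (frobInner X X)

lemma frobInner_eq {m n : ℕ} (X Y : Matrix (Fin m) (Fin n) ℝ) :
    frobInner X Y = ∑ j, ∑ i, X i j * Y i j := by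
  simp [frobInner, Matrix.trace, Matrix.mul_apply, Matrix.diag]

lemma sum4_comm {α β γ δ M : Type*} [AddCommMonoid M] (s : Finset α) (t : Finset β)
    (a : Finset γ) (b : Finset δ) (f : α → β → γ → δ → M) :
    ∑ x ∈ s, ∑ y ∈ t, ∑ z ∈ a, ∑ w ∈ b, f x y z w
      = ∑ z ∈ a, ∑ w ∈ b, ∑ x ∈ s, ∑ y ∈ t, f x y z w := by
  refine Eq.trans (Finset.sum_congr rfl fun x _ => Finset.sum_comm) ?_
  refine Eq.trans Finset.sum_comm ?_
  refine Finset.sum_congr rfl fun z _ => ?_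
  refine Eq.trans (Finset.sum_congr rfl fun x _ => Finset.sum_comm) ?_
  exact Finset.sum_comm

lemma frob_sum_sum {m n p : ℕ} (σ : Fin p → ℝ)
    (u : Fin p → Fin m → ℝ) (v : Fin p → Fin n → ℝ)
    (hu : ∀ k l : Fin p, ∑ i, u k i * u l i = if k = l then (1 : ℝ) else 0)
    (hv : ∀ k l : Fin p, ∑ j, v k j * v l j = if k = l then (1 : ℝ) else 0)
    (s : Finset (Fin p)) :
    frobInner (∑ k ∈ s, σ k • vecMulVec (u k) (v k))
        (∑ k ∈ s, σ k • vecMulVec (u k) (v k)) = ∑ k ∈ s, σ k ^ 2 := by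
  simp only [frobInner_eq, Matrix.sum_apply, Matrix.smul_apply, smul_eq_mul,
    vecMulVec_apply, Finset.sum_mul_sum]
  calc ∑ j, ∑ i, ∑ k ∈ s, ∑ l ∈ s, (σ k * (u k i * v k j)) * (σ l * (u l i * v l j))
      = ∑ k ∈ s, ∑ l ∈ s, ∑ j, ∑ i,
          (σ k * σ l) * ((u k i * u l i) * (v k j * v l j)) := by
        rw [sum4_comm]
        exact Finset.sum_congr rfl fun k _ => Finset.sum_congr rfl fun l _ =>
          Finset.sum_congr rfl fun j _ => Finset.sum_congr rfl fun i _ => by ring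
    _ = ∑ k ∈ s, ∑ l ∈ s,
          (σ k * σ l) * ((∑ i, u k i * u l i) * (∑ j, v k j * v l j)) := by
        refine Finset.sum_congr rfl fun k _ => Finset.sum_congr rfl fun l _ => ?_
        refine Eq.symm ?_
        rw [Finset.sum_mul_sum]
        simp only [Finset.mul_sum]
        exact Finset.sum_comm
    _ = ∑ k ∈ s, σ k ^ 2 := by
        simp only [hu, hv]
        refine Finset.sum_congr rfl fun k hk => ?_
        rw [Finset.sum_eq_single k]
        · simp [pow_two]
        · intro l hl hlk; simp [Ne.symm hlk]
        · intro hk'; exact absurd hk hk'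

/-- expanding a square of a linear combination with orthonormal vectors -/
lemma sum_sq_orthonormal {n p : ℕ} (c : Fin p → ℝ) (v : Fin p → Fin n → ℝ)
    (hv : ∀ k l : Fin p, ∑ j, v k j * v l j = if k = l then (1 : ℝ) else 0) :
    ∑ j, (∑ k, c k * v k j) ^ 2 = ∑ k, c k ^ 2 := by
  suffices h : ∑ j, (∑ k, c k * v k j) * (∑ k, c k * v k j) = ∑ k, c k * c k by
    calc ∑ j, (∑ k, c k * v k j) ^ 2
        = ∑ j, (∑ k, c k * v k j) * (∑ k, c k * v k j) :=
          Finset.sum_congr rfl fun j _ => pow_two _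
      _ = ∑ k, c k * c k := h
      _ = ∑ k, c k ^ 2 := Finset.sum_congr rfl fun k _ => (pow_two _).symm
  simp only [Finset.sum_mul_sum]
  calc ∑ j, ∑ k, ∑ l, (c k * v k j) * (c l * v l j)
      = ∑ k, ∑ l, ∑ j : Fin n, (c k * c l) * (v k j * v l j) := by
        refine Eq.trans Finset.sum_comm ?_
        refine Finset.sum_congr rfl fun k _ => ?_
        refine Eq.trans Finset.sum_comm ?_
        exact Finset.sum_congr rfl fun l _ => Finset.sum_congr rfl fun j _ => by ring
    _ = ∑ k, ∑ l, (c k * c l) * ∑ j, (v k j * v l j) := by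
        simp only [Finset.mul_sum]
    _ = ∑ k, c k * c k := by
        simp only [hv]
        refine Finset.sum_congr rfl fun k _ => ?_
        rw [Finset.sum_eq_single k]
        · simp
        · intro l _ hlk; simp [Ne.symm hlk]
        · intro hk'; exact absurd (Finset.mem_univ k) hk'

/-- the exchange / rearrangement bound -/
lemma rearrange_bound {p r : ℕ} (σ : Fin p → ℝ) (hnn : ∀ k, 0 ≤ σ k)
    (hanti : ∀ k l : Fin p, k ≤ l → σ l ≤ σ k) (c : Fin p → ℝ)
    (hc0 : ∀ k, 0 ≤ c k) (hc1 : ∀ k, c k ≤ 1) (hcs : ∑ k, c k ≤ (r : ℝ))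
    (hr1 : 1 ≤ r) (hrp : r ≤ p) :
    ∑ k, σ k ^ 2 * c k ≤ ∑ k ∈ Finset.univ.filter (fun k : Fin p => (k : ℕ) < r), σ k ^ 2 := by
  have hr0 : r - 1 < p := by omega
  set i₀ : Fin p := ⟨r - 1, hr0⟩ with hi₀
  set t : ℝ := σ i₀ ^ 2 with ht
  have ht0 : 0 ≤ t := sq_nonneg _
  have hcard : (Finset.univ.filter (fun k : Fin p => (k : ℕ) < r)).card = r := by
    have : (Finset.univ.filter (fun k : Fin p => (k : ℕ) < r))
        = Finset.univ.map (Fin.castLEEmb hrp) := by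
      ext k
      simp only [Finset.mem_filter, Finset.mem_univ, true_and, Finset.mem_map,
        Fin.castLEEmb, Function.Embedding.coeFn_mk]
      constructor
      · intro hk; exact ⟨⟨(k : ℕ), hk⟩, rfl⟩
      · rintro ⟨a, rfl⟩; exact a.2.trans_le le_rfl
    rw [this, Finset.card_map, Finset.card_univ, Fintype.card_fin]
  -- split the sum
  rw [← Finset.sum_filter_add_sum_filter_not Finset.univ (fun k : Fin p => (k : ℕ) < r)
      (fun k => σ k ^ 2 * c k)]
  have h1 : ∑ k ∈ Finset.univ.filter (fun k : Fin p => (k : ℕ) < r), σ k ^ 2 * c k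
      ≤ (∑ k ∈ Finset.univ.filter (fun k : Fin p => (k : ℕ) < r), σ k ^ 2)
        + ∑ k ∈ Finset.univ.filter (fun k : Fin p => (k : ℕ) < r), t * (c k - 1) := by
    rw [← Finset.sum_add_distrib]
    refine Finset.sum_le_sum fun k hk => ?_
    have hk' : (k : ℕ) < r := (Finset.mem_filter.mp hk).2
    have hki : k ≤ i₀ := by
      rw [Fin.le_def]; simp only [hi₀]; omega
    have hσk : t ≤ σ k ^ 2 := by
      have := hanti k i₀ hki
      exact pow_le_pow_left₀ (hnn i₀) this 2
    nlinarith [hc1 k, hc0 k]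
  have h2 : ∑ k ∈ Finset.univ.filter (fun k : Fin p => ¬ (k : ℕ) < r), σ k ^ 2 * c k
      ≤ ∑ k ∈ Finset.univ.filter (fun k : Fin p => ¬ (k : ℕ) < r), t * c k := by
    refine Finset.sum_le_sum fun k hk => ?_
    have hk' : ¬ (k : ℕ) < r := (Finset.mem_filter.mp hk).2
    have hki : i₀ ≤ k := by
      rw [Fin.le_def]; simp only [hi₀]; omega
    have hσk : σ k ^ 2 ≤ t := by
      have := hanti i₀ k hki
      exact pow_le_pow_left₀ (hnn k) this 2
    nlinarith [hc0 k]
  have h3 : (∑ k ∈ Finset.univ.filter (fun k : Fin p => (k : ℕ) < r), t * (c k - 1))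
      + ∑ k ∈ Finset.univ.filter (fun k : Fin p => ¬ (k : ℕ) < r), t * c k ≤ 0 := by
    have : (∑ k ∈ Finset.univ.filter (fun k : Fin p => (k : ℕ) < r), t * (c k - 1))
        + ∑ k ∈ Finset.univ.filter (fun k : Fin p => ¬ (k : ℕ) < r), t * c k
        = t * ((∑ k, c k) - r) := by
      simp only [mul_sub, mul_one, Finset.sum_sub_distrib, Finset.sum_const, smul_eq_mul,
        hcard, Finset.mul_sum, nsmul_eq_mul]
      rw [← Finset.sum_filter_add_sum_filter_not Finset.univ
        (fun k : Fin p => (k : ℕ) < r) (fun k => t * c k)]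
      ring
    rw [this]
    have : (∑ k, c k) - (r : ℝ) ≤ 0 := by linarith
    exact mul_nonpos_of_nonneg_of_nonpos ht0 this
  linarith



-- per-column projection inequality
lemma col_proj_ineq {m : ℕ} (K : Submodule ℝ (EuclideanSpace ℝ (Fin m)))
    [K.HasOrthogonalProjection]
    (q : OrthonormalBasis (Fin (Module.finrank ℝ K)) ℝ K)
    (w b : EuclideanSpace ℝ (Fin m)) (hb : b ∈ K) :
    ‖w‖ ^ 2 - ∑ i, (inner ℝ ((q i : EuclideanSpace ℝ (Fin m))) w : ℝ) ^ 2
      ≤ ‖w - b‖ ^ 2 := by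
  set P := K.orthogonalProjection
  have key : ∀ y ∈ K, ‖w - y‖ ^ 2 = ‖w - (P w : EuclideanSpace ℝ (Fin m))‖ ^ 2
      + ‖(P w : EuclideanSpace ℝ (Fin m)) - y‖ ^ 2 := by
    intro y hy
    have hx : w - (P w : EuclideanSpace ℝ (Fin m)) ∈ Kᗮ :=
      K.sub_starProjection_mem_orthogonal w
    have hy' : (P w : EuclideanSpace ℝ (Fin m)) - y ∈ K :=
      K.sub_mem (Submodule.coe_mem _) hy
    have hz : (inner ℝ (w - (P w : EuclideanSpace ℝ (Fin m)))
        ((P w : EuclideanSpace ℝ (Fin m)) - y) : ℝ) = 0 :=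
      Submodule.inner_left_of_mem_orthogonal hy' hx
    calc ‖w - y‖ ^ 2
        = ‖(w - (P w : EuclideanSpace ℝ (Fin m)))
            + ((P w : EuclideanSpace ℝ (Fin m)) - y)‖ ^ 2 := by
          rw [sub_add_sub_cancel]
      _ = _ := by rw [norm_add_sq_real, hz]; ring
  have hnormP : ‖(P w : EuclideanSpace ℝ (Fin m))‖ ^ 2
      = ∑ i, (inner ℝ ((q i : EuclideanSpace ℝ (Fin m))) w : ℝ) ^ 2 := by
    rw [← Submodule.coe_norm, ← q.repr.norm_map (P w)]
    rw [← real_inner_self_eq_norm_sq, PiLp.inner_apply]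
    refine Finset.sum_congr rfl fun i _ => ?_
    rw [q.repr_apply_apply, K.inner_orthogonalProjection_eq_of_mem_left]
    simp [RCLike.inner_apply, pow_two]
  have h1 := key b hb
  have h2 := key 0 K.zero_mem
  simp only [sub_zero] at h2
  nlinarith [sq_nonneg ‖(P w : EuclideanSpace ℝ (Fin m)) - b‖]

lemma main_ineq {m n : ℕ}
    (σ : Fin (min m n) → ℝ)
    (u : Fin (min m n) → Fin m → ℝ) (v : Fin (min m n) → Fin n → ℝ)
    (hσ_nonneg : ∀ k, 0 ≤ σ k)
    (hσ_anti : ∀ k l : Fin (min m n), k ≤ l → σ l ≤ σ k)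
    (hu : ∀ k l : Fin (min m n), ∑ i, u k i * u l i = if k = l then (1 : ℝ) else 0)
    (hv : ∀ k l : Fin (min m n), ∑ j, v k j * v l j = if k = l then (1 : ℝ) else 0)
    (W : Matrix (Fin m) (Fin n) ℝ)
    (hW : W = ∑ k, σ k • vecMulVec (u k) (v k))
    (r : ℕ) (hr1 : 1 ≤ r) (hrp : r ≤ min m n)
    (B : Matrix (Fin m) (Fin n) ℝ) (hB : B.rank ≤ r) :
    ∑ k ∈ Finset.univ.filter (fun k : Fin (min m n) => r ≤ (k : ℕ)), σ k ^ 2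
      ≤ frobInner (W - B) (W - B) := by
  classical
  let wc : Fin n → EuclideanSpace ℝ (Fin m) := fun j => WithLp.toLp 2 (fun i => W i j : Fin m → ℝ)
  let bc : Fin n → EuclideanSpace ℝ (Fin m) := fun j => WithLp.toLp 2 (fun i => B i j : Fin m → ℝ)
  let uE : Fin (min m n) → EuclideanSpace ℝ (Fin m) := fun k => WithLp.toLp 2 (u k : Fin m → ℝ)
  let e : (Fin m → ℝ) ≃ₗ[ℝ] EuclideanSpace ℝ (Fin m) :=
    (WithLp.linearEquiv 2 ℝ (Fin m → ℝ)).symm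
  let K : Submodule ℝ (EuclideanSpace ℝ (Fin m)) :=
    (LinearMap.range B.mulVecLin).map (e : (Fin m → ℝ) →ₗ[ℝ] EuclideanSpace ℝ (Fin m))
  have hfinK : Module.finrank ℝ K ≤ r :=
    le_trans (le_of_eq (LinearEquiv.finrank_map_eq e _)) hB
  have hmemb : ∀ j, bc j ∈ K := by
    intro j
    refine Submodule.mem_map_of_mem ⟨Pi.single j 1, ?_⟩
    ext i
    simp [Matrix.mulVec_single]
  set d := Module.finrank ℝ K with hd
  let q : OrthonormalBasis (Fin d) ℝ K := stdOrthonormalBasis ℝ K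
  let g : Fin d → Fin (min m n) → ℝ :=
    fun i k => (inner ℝ ((q i : EuclideanSpace ℝ (Fin m))) (uE k) : ℝ)
  have hqE : Orthonormal ℝ (fun i => ((q i : EuclideanSpace ℝ (Fin m)))) := by
    rw [orthonormal_iff_ite]
    intro i j
    rw [← Submodule.coe_inner]
    exact orthonormal_iff_ite.mp q.orthonormal i j
  have huE : Orthonormal ℝ uE := by
    rw [orthonormal_iff_ite]
    intro k l
    rw [PiLp.inner_apply]
    simpa [RCLike.inner_apply, uE, mul_comm] using hu k l
  have hinner_w : ∀ (i : Fin d) (j : Fin n),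
      (inner ℝ ((q i : EuclideanSpace ℝ (Fin m))) (wc j) : ℝ)
        = ∑ k, (σ k * g i k) * v k j := by
    intro i j
    rw [PiLp.inner_apply]
    have hg : ∀ k, g i k = ∑ a, (q i : EuclideanSpace ℝ (Fin m)) a * u k a := by
      intro k
      simp [g, uE, PiLp.inner_apply, RCLike.inner_apply, mul_comm]
    calc ∑ a, (inner ℝ ((q i : EuclideanSpace ℝ (Fin m)) a) (wc j a) : ℝ)
        = ∑ a, ∑ k, (σ k * ((q i : EuclideanSpace ℝ (Fin m)) a * u k a)) * v k j := by
          refine Finset.sum_congr rfl fun a _ => ?_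
          rw [RCLike.inner_apply, conj_trivial]
          have : wc j a = W a j := rfl
          rw [this, hW]
          simp only [Matrix.sum_apply, Matrix.smul_apply, vecMulVec_apply, smul_eq_mul,
            Finset.mul_sum, Finset.sum_mul]
          exact Finset.sum_congr rfl fun k _ => by ring
      _ = ∑ k, (σ k * (∑ a, (q i : EuclideanSpace ℝ (Fin m)) a * u k a)) * v k j := by
          rw [Finset.sum_comm]
          refine Finset.sum_congr rfl fun k _ => ?_
          simp only [Finset.sum_mul, Finset.mul_sum]
      _ = ∑ k, (σ k * g i k) * v k j := by
          refine Finset.sum_congr rfl fun k _ => ?_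
          rw [hg]
  have hwbnorm : ∀ j, ‖wc j - bc j‖ ^ 2 = ∑ i, (W i j - B i j) * (W i j - B i j) := by
    intro j
    rw [← real_inner_self_eq_norm_sq, PiLp.inner_apply]
    refine Finset.sum_congr rfl fun i _ => ?_
    rw [RCLike.inner_apply, conj_trivial]
    rfl
  have hwnorm : ∀ j, ‖wc j‖ ^ 2 = ∑ i, W i j * W i j := by
    intro j
    rw [← real_inner_self_eq_norm_sq, PiLp.inner_apply]
    refine Finset.sum_congr rfl fun i _ => ?_
    rw [RCLike.inner_apply, conj_trivial]
  have hfrobWB : frobInner (W - B) (W - B) = ∑ j, ‖wc j - bc j‖ ^ 2 := by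
    rw [frobInner_eq]
    exact Finset.sum_congr rfl fun j _ => by rw [hwbnorm]; simp [Matrix.sub_apply]
  have hfrobW : ∑ j, ‖wc j‖ ^ 2 = ∑ k, σ k ^ 2 := by
    have h := frob_sum_sum σ u v hu hv Finset.univ
    rw [← hW] at h
    rw [← h, frobInner_eq]
    exact Finset.sum_congr rfl fun j _ => hwnorm j
  have hcols : ∑ j, ‖wc j‖ ^ 2
      - ∑ j, ∑ i, (inner ℝ ((q i : EuclideanSpace ℝ (Fin m))) (wc j) : ℝ) ^ 2
      ≤ frobInner (W - B) (W - B) := by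
    rw [hfrobWB, ← Finset.sum_sub_distrib]
    exact Finset.sum_le_sum fun j _ => col_proj_ineq K q (wc j) (bc j) (hmemb j)
  set c : Fin (min m n) → ℝ := fun k => ∑ i, g i k ^ 2 with hc
  have htot : ∑ j, ∑ i, (inner ℝ ((q i : EuclideanSpace ℝ (Fin m))) (wc j) : ℝ) ^ 2
      = ∑ k, σ k ^ 2 * c k := by
    rw [Finset.sum_comm]
    calc ∑ i, ∑ j, (inner ℝ ((q i : EuclideanSpace ℝ (Fin m))) (wc j) : ℝ) ^ 2
        = ∑ i, ∑ k, (σ k * g i k) ^ 2 := by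
          refine Finset.sum_congr rfl fun i _ => ?_
          rw [← sum_sq_orthonormal (fun k => σ k * g i k) v hv]
          exact Finset.sum_congr rfl fun j _ => by rw [hinner_w i j]
      _ = ∑ k, ∑ i, (σ k * g i k) ^ 2 := Finset.sum_comm
      _ = ∑ k, σ k ^ 2 * c k := by
          refine Finset.sum_congr rfl fun k _ => ?_
          simp [hc, Finset.mul_sum, mul_pow]
  have hc1 : ∀ k, c k ≤ 1 := by
    intro k
    have hb := hqE.sum_inner_products_le (uE k) (s := Finset.univ)
    have hnu : ‖uE k‖ ^ 2 = 1 := by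
      rw [← real_inner_self_eq_norm_sq, PiLp.inner_apply]
      simpa [RCLike.inner_apply, uE, pow_two] using hu k k
    calc c k = ∑ i, ‖(inner ℝ ((q i : EuclideanSpace ℝ (Fin m))) (uE k) : ℝ)‖ ^ 2 := by
          simp [hc, g, Real.norm_eq_abs, sq_abs]
      _ ≤ ‖uE k‖ ^ 2 := hb
      _ = 1 := hnu
  have hc0 : ∀ k, 0 ≤ c k := fun k => Finset.sum_nonneg fun i _ => sq_nonneg _
  have hcsum : ∑ k, c k ≤ (r : ℝ) := by
    have hcomm : ∑ k, c k = ∑ i : Fin d, ∑ k, g i k ^ 2 := Finset.sum_comm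
    rw [hcomm]
    have hstep : ∀ i : Fin d, ∑ k, g i k ^ 2 ≤ 1 := by
      intro i
      have hb := huE.sum_inner_products_le ((q i : EuclideanSpace ℝ (Fin m)))
        (s := Finset.univ)
      have hq1 : ‖((q i : EuclideanSpace ℝ (Fin m)))‖ ^ 2 = 1 := by
        rw [← Submodule.coe_norm, q.orthonormal.1 i, one_pow]
      calc ∑ k, g i k ^ 2
          = ∑ k, ‖(inner ℝ (uE k) ((q i : EuclideanSpace ℝ (Fin m))) : ℝ)‖ ^ 2 := by
            refine Finset.sum_congr rfl fun k _ => ?_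
            rw [real_inner_comm]
            simp [g, Real.norm_eq_abs, sq_abs]
        _ ≤ ‖((q i : EuclideanSpace ℝ (Fin m)))‖ ^ 2 := hb
        _ = 1 := hq1
    calc ∑ i : Fin d, ∑ k, g i k ^ 2 ≤ ∑ _i : Fin d, (1 : ℝ) :=
          Finset.sum_le_sum fun i _ => hstep i
      _ = (d : ℝ) := by simp
      _ ≤ (r : ℝ) := by exact_mod_cast hfinK
  have hrear := rearrange_bound σ hσ_nonneg hσ_anti c hc0 hc1 hcsum hr1 hrp
  have hsplit : (∑ k ∈ Finset.univ.filter (fun k : Fin (min m n) => (k : ℕ) < r), σ k ^ 2)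
      + ∑ k ∈ Finset.univ.filter (fun k : Fin (min m n) => r ≤ (k : ℕ)), σ k ^ 2
      = ∑ k, σ k ^ 2 := by
    rw [← Finset.sum_filter_add_sum_filter_not Finset.univ
      (fun k : Fin (min m n) => (k : ℕ) < r) (fun k => σ k ^ 2)]
    congr 1
    apply Finset.sum_congr _ (fun _ _ => rfl)
    apply Finset.filter_congr; intro k _; simp [not_lt]
  linarith [hcols, htot, hfrobW]

/-- (Eckart–Young–Mirsky theorem in Frobenius norm.) Let W = Σ_{k<p} σ_k u_k v_kᵀ
be a singular value decomposition (p = min(m,n), σ decreasing and nonnegative,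
(u_k), (v_k) orthonormal), and let W_r = Σ_{k<r} σ_k u_k v_kᵀ be the rank-r
truncation for 1 ≤ r ≤ p. Then ‖W − W_r‖_F = sqrt(Σ_{k≥r} σ_k²), and
‖W − W_r‖_F ≤ ‖W − B‖_F for every B of rank at most r. -/
theorem eckart_young_mirsky_frobenius {m n : ℕ}
    (σ : Fin (min m n) → ℝ)
    (u : Fin (min m n) → Fin m → ℝ) (v : Fin (min m n) → Fin n → ℝ)
    (hσ_nonneg : ∀ k, 0 ≤ σ k)
    (hσ_anti : ∀ k l : Fin (min m n), k ≤ l → σ l ≤ σ k)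
    (hu : ∀ k l : Fin (min m n), ∑ i, u k i * u l i = if k = l then (1 : ℝ) else 0)
    (hv : ∀ k l : Fin (min m n), ∑ j, v k j * v l j = if k = l then (1 : ℝ) else 0)
    (W : Matrix (Fin m) (Fin n) ℝ)
    (hW : W = ∑ k, σ k • vecMulVec (u k) (v k))
    (r : ℕ) (hr1 : 1 ≤ r) (hrp : r ≤ min m n) :
    frobNorm (W - ∑ k ∈ Finset.univ.filter (fun k : Fin (min m n) => (k : ℕ) < r),
        σ k • vecMulVec (u k) (v k)) =
      Real.sqrt (∑ k ∈ Finset.univ.filter (fun k : Fin (min m n) => r ≤ (k : ℕ)),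
        (σ k) ^ 2) ∧
    ∀ B : Matrix (Fin m) (Fin n) ℝ, B.rank ≤ r →
      frobNorm (W - ∑ k ∈ Finset.univ.filter (fun k : Fin (min m n) => (k : ℕ) < r),
          σ k • vecMulVec (u k) (v k)) ≤
        frobNorm (W - B) := by
  have hfilter : Finset.univ.filter (fun k : Fin (min m n) => ¬ (k : ℕ) < r)
      = Finset.univ.filter (fun k : Fin (min m n) => r ≤ (k : ℕ)) := by
    apply Finset.filter_congr; intro k _; simp [not_lt]
  have hD : W - (∑ k ∈ Finset.univ.filter (fun k : Fin (min m n) => (k : ℕ) < r),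
        σ k • vecMulVec (u k) (v k))
      = ∑ k ∈ Finset.univ.filter (fun k : Fin (min m n) => r ≤ (k : ℕ)),
        σ k • vecMulVec (u k) (v k) := by
    rw [hW, ← Finset.sum_filter_add_sum_filter_not Finset.univ
      (fun k : Fin (min m n) => (k : ℕ) < r) (fun k => σ k • vecMulVec (u k) (v k)), hfilter]
    abel
  have hpart1 : frobNorm (W - ∑ k ∈ Finset.univ.filter
        (fun k : Fin (min m n) => (k : ℕ) < r), σ k • vecMulVec (u k) (v k)) =
      Real.sqrt (∑ k ∈ Finset.univ.filter (fun k : Fin (min m n) => r ≤ (k : ℕ)),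
        (σ k) ^ 2) := by
    rw [hD, frobNorm, frob_sum_sum σ u v hu hv]
  refine ⟨hpart1, fun B hB => ?_⟩
  rw [hpart1, frobNorm]
  apply Real.sqrt_le_sqrt
  exact main_ineq σ u v hσ_nonneg hσ_anti hu hv W hW r hr1 hrp B hB
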